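/- arXiv:2602.20416 — 3 statements merged into one kernel-verified Lean document; each statement's English description precedes it below -/
import Mathlib

section
/- For a sequence of i.i.d. real-valued random variables with a common continuous distribution function, the record indicator random variables ζ_1, ζ_2, ..., ζ_n are mutually independent for every n ≥ 1. -/
open MeasureTheory ProbabilityTheory
open scoped ENNReal Classical

open Finset
open scoped ENNReal Classical

namespace RecordAux

variable {n : ℕ}

/-- number of indices `i < j` with `π i < π j`, as an element of `Fin (j+1)`. -/
noncomputable def code (π : Equiv.Perm (Fin n)) (j : Fin n) : Fin ((j : ℕ) + 1) :=
  ⟨(univ.filter fun i => i < j ∧ π i < π j).card, by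
    have h1 : (univ.filter fun i => i < j ∧ π i < π j) ⊆ Finset.Iio j := by
      intro i hi
      simp only [mem_filter] at hi
      simpa using hi.2.1
    have := Finset.card_le_card h1
    rw [Fin.card_Iio] at this
    omega⟩

lemma card_lt_val (π : Equiv.Perm (Fin n)) (j : Fin n) :
    (univ.filter fun i => π i < π j).card = (π j : ℕ) := by
  have himg : (univ.filter fun i => π i < π j) = (Finset.Iio (π j)).image π.symm := by
    ext i
    simp only [mem_filter, mem_univ, true_and, Finset.mem_image, Finset.mem_Iio]
    constructor
    · intro h; exact ⟨π i, h, π.symm_apply_apply i⟩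
    · rintro ⟨v, hv, rfl⟩; simpa using hv
  rw [himg, Finset.card_image_of_injective _ π.symm.injective, Fin.card_Iio]

lemma code_split (π : Equiv.Perm (Fin n)) (j : Fin n) :
    ((code π j : ℕ)) + (univ.filter fun i => j < i ∧ π i < π j).card = (π j : ℕ) := by
  have hsplit : (univ.filter fun i => π i < π j)
      = (univ.filter fun i => i < j ∧ π i < π j) ∪ (univ.filter fun i => j < i ∧ π i < π j) := by
    ext i
    simp only [mem_filter, mem_univ, true_and, Finset.mem_union]
    constructor
    · intro h
      rcases lt_trichotomy i j with hij | rfl | hij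
      · exact Or.inl ⟨hij, h⟩
      · exact absurd h (lt_irrefl _)
      · exact Or.inr ⟨hij, h⟩
    · rintro (⟨_, h⟩ | ⟨_, h⟩) <;> exact h
  have hdisj : Disjoint (univ.filter fun i => i < j ∧ π i < π j)
      (univ.filter fun i => j < i ∧ π i < π j) := by
    rw [Finset.disjoint_left]
    intro i hi hi'
    simp only [mem_filter] at hi hi'
    exact absurd (hi.2.1.trans hi'.2.1) (lt_irrefl i)
  have := card_lt_val π j
  rw [hsplit, Finset.card_union_of_disjoint hdisj] at this
  simpa [code] using this

lemma code_injective : Function.Injective (fun π : Equiv.Perm (Fin n) => code π) := by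
  intro π π' hc
  by_contra hne
  have hD : (univ.filter fun i => π i ≠ π' i).Nonempty := by
    by_contra hD
    apply hne
    ext i
    rw [Finset.not_nonempty_iff_eq_empty] at hD
    by_contra hi
    have hmem : i ∈ univ.filter fun i => π i ≠ π' i := by
      simp only [mem_filter, mem_univ, true_and]
      exact fun hx => hi (congrArg Fin.val hx)
    rw [hD] at hmem
    exact absurd hmem (Finset.notMem_empty i)
  set j := (univ.filter fun i => π i ≠ π' i).max' hD with hj
  have hjm : π j ≠ π' j := by
    have := (univ.filter fun i => π i ≠ π' i).max'_mem hD
    rw [← hj] at this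
    simpa using this
  have hgt : ∀ i, j < i → π i = π' i := by
    intro i hi
    by_contra hne'
    have : i ∈ univ.filter fun i => π i ≠ π' i := by simpa using hne'
    exact absurd (Finset.le_max' _ i this) (not_le.mpr hi)
  have key : ∀ ρ ρ' : Equiv.Perm (Fin n), (∀ i, j < i → ρ i = ρ' i) →
      (code ρ j : ℕ) = (code ρ' j : ℕ) → ρ j < ρ' j → False := by
    intro ρ ρ' htl hcd hlt
    have h1 := code_split ρ j
    have h2 := code_split ρ' j
    -- tails: counting function for ρ' equals that for ρ
    have htail : ∀ v : Fin n, (univ.filter fun i => j < i ∧ ρ' i < v)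
        = (univ.filter fun i => j < i ∧ ρ i < v) := by
      intro v
      apply Finset.filter_congr
      intro i _
      simp only [and_congr_right_iff]
      intro hji
      rw [htl i hji]
    rw [htail] at h2
    set B := univ.filter fun i => j < i ∧ ρ j ≤ ρ i ∧ ρ i < ρ' j with hB
    have hsplit : (univ.filter fun i => j < i ∧ ρ i < ρ' j)
        = (univ.filter fun i => j < i ∧ ρ i < ρ j) ∪ B := by
      ext i
      simp only [mem_filter, mem_univ, true_and, Finset.mem_union, hB]
      constructor
      · rintro ⟨hji, hiv⟩
        rcases lt_or_ge (ρ i) (ρ j) with h | h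
        · exact Or.inl ⟨hji, h⟩
        · exact Or.inr ⟨hji, h, hiv⟩
      · rintro (⟨hji, hiv⟩ | ⟨hji, _, hiv⟩)
        · exact ⟨hji, hiv.trans hlt⟩
        · exact ⟨hji, hiv⟩
    have hdisj : Disjoint (univ.filter fun i => j < i ∧ ρ i < ρ j) B := by
      rw [Finset.disjoint_left]
      intro i hi hi'
      simp only [hB, mem_filter] at hi hi'
      exact absurd hi.2.2 (not_lt.mpr hi'.2.2.1)
    have hcard : (univ.filter fun i => j < i ∧ ρ i < ρ' j).card
        = (univ.filter fun i => j < i ∧ ρ i < ρ j).card + B.card := by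
      rw [hsplit, Finset.card_union_of_disjoint hdisj]
    -- bound on B.card
    have himg : B.image (fun i => ρ i) ⊆ Finset.Ioo (ρ j) (ρ' j) := by
      intro v hv
      simp only [Finset.mem_image, hB, mem_filter] at hv
      obtain ⟨i, ⟨_, hji, hle, hlt'⟩, rfl⟩ := hv
      refine Finset.mem_Ioo.mpr ⟨lt_of_le_of_ne hle ?_, hlt'⟩
      intro hvv
      exact absurd (ρ.injective hvv.symm).symm (by intro hij; rw [hij] at hji; exact lt_irrefl _ hji)
    have hBcard : B.card ≤ ((ρ' j : ℕ)) - (ρ j : ℕ) - 1 := by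
      have := Finset.card_le_card himg
      rw [Finset.card_image_of_injective _ ρ.injective, Fin.card_Ioo] at this
      exact this
    have hltn : (ρ j : ℕ) < (ρ' j : ℕ) := hlt
    omega
  rcases lt_or_gt_of_ne hjm with hlt | hlt
  · exact key π π' hgt (by simp only at hc; rw [hc]) hlt
  · exact key π' π (fun i hi => (hgt i hi).symm) (by simp only at hc; rw [hc]) hlt

lemma code_eq_iff (π : Equiv.Perm (Fin n)) (j : Fin n) :
    (code π j : ℕ) = (j : ℕ) ↔ ∀ i, i < j → π i < π j := by
  constructor
  · intro hcd i hij
    have hsub : (univ.filter fun i => i < j ∧ π i < π j) ⊆ Finset.Iio j := by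
      intro i hi
      simp only [mem_filter] at hi
      simpa using hi.2.1
    have hcards : (Finset.Iio j).card ≤ (univ.filter fun i => i < j ∧ π i < π j).card := by
      rw [Fin.card_Iio]
      simpa [code] using hcd.ge
    have heq := Finset.eq_of_subset_of_card_le hsub hcards
    have : i ∈ univ.filter fun i => i < j ∧ π i < π j := by
      rw [heq]; simpa using hij
    simp only [mem_filter] at this
    exact this.2.2
  · intro hall
    have heq : (univ.filter fun i => i < j ∧ π i < π j) = Finset.Iio j := by
      ext i
      simp only [mem_filter, mem_univ, true_and, Finset.mem_Iio]
      exact ⟨fun h => h.1, fun h => ⟨h, hall i h⟩⟩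
    simp only [code, heq, Fin.card_Iio]

lemma prod_univ_fin_succ_eq_factorial : ∏ j : Fin n, ((j : ℕ) + 1) = Nat.factorial n := by
  rw [Fin.prod_univ_eq_prod_range (fun i => i + 1) n]
  exact Finset.prod_range_add_one_eq_factorial n

lemma count_records (S : Finset (Fin n)) :
    (univ.filter fun π : Equiv.Perm (Fin n) => ∀ j ∈ S, ∀ i, i < j → π i < π j).card
      = ∏ j ∈ univ \ S, ((j : ℕ) + 1) := by
  classical
  have hbij : Function.Bijective (fun π : Equiv.Perm (Fin n) => code π) := by
    rw [Fintype.bijective_iff_injective_and_card]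
    refine ⟨code_injective, ?_⟩
    rw [Fintype.card_perm, Fintype.card_pi]
    simp only [Fintype.card_fin]
    exact (prod_univ_fin_succ_eq_factorial (n := n)).symm
  have hcard : (univ.filter fun π : Equiv.Perm (Fin n) => ∀ j ∈ S, ∀ i, i < j → π i < π j).card
      = (univ.filter fun f : (j : Fin n) → Fin ((j : ℕ) + 1) => ∀ j ∈ S, (f j : ℕ) = (j : ℕ)).card := by
    refine Finset.card_bij (fun π _ => code π) ?_ ?_ ?_
    · intro π hπ
      simp only [mem_filter, mem_univ, true_and] at hπ ⊢
      intro j hj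
      exact (code_eq_iff π j).mpr (hπ j hj)
    · intro π₁ _ π₂ _ hcc
      exact code_injective hcc
    · intro f hf
      simp only [mem_filter, mem_univ, true_and] at hf
      obtain ⟨π, hπ⟩ := hbij.2 f
      refine ⟨π, ?_, hπ⟩
      simp only [mem_filter, mem_univ, true_and]
      intro j hj
      apply (code_eq_iff π j).mp
      rw [show code π = f from hπ]
      exact hf j hj
  rw [hcard]
  have hset : (univ.filter fun f : (j : Fin n) → Fin ((j : ℕ) + 1) => ∀ j ∈ S, (f j : ℕ) = (j : ℕ))
      = Fintype.piFinset (fun j => if j ∈ S then {Fin.last (j : ℕ)} else univ) := by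
    ext f
    simp only [mem_filter, mem_univ, true_and, Fintype.mem_piFinset]
    constructor
    · intro hf j
      by_cases hj : j ∈ S
      · simp only [if_pos hj, Finset.mem_singleton]
        exact Fin.ext (by simpa [Fin.val_last] using hf j hj)
      · simp [if_neg hj]
    · intro hf j hj
      have := hf j
      rw [if_pos hj, Finset.mem_singleton] at this
      rw [this, Fin.val_last]
  rw [hset, Fintype.card_piFinset]
  rw [← Finset.prod_filter_mul_prod_filter_not univ (· ∈ S)]
  have h1 : ∏ j ∈ univ.filter (· ∈ S), (if j ∈ S then ({Fin.last (j:ℕ)} : Finset _) else univ).card = 1 := by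
    apply Finset.prod_eq_one
    intro j hj
    simp only [mem_filter] at hj
    rw [if_pos hj.2, Finset.card_singleton]
  rw [h1, one_mul]
  apply Finset.prod_congr
  · ext j; simp [Finset.mem_sdiff]
  · intro j hj
    rw [Finset.mem_sdiff] at hj
    rw [if_neg hj.2, Finset.card_univ, Fintype.card_fin]

section MeasurePart

open MeasureTheory

variable {μ : Measure ℝ} [IsProbabilityMeasure μ] {n : ℕ}

/-- the set of tuples sorted strictly increasingly by `σ`. -/
def Osort (σ : Equiv.Perm (Fin n)) : Set (Fin n → ℝ) := {x | StrictMono fun i => x (σ i)}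

/-- the record-event set. -/
def ES (S : Finset (Fin n)) : Set (Fin n → ℝ) := {x | ∀ j ∈ S, ∀ i, i < j → x i < x j}

lemma measurableSet_Osort (σ : Equiv.Perm (Fin n)) : MeasurableSet (Osort σ) := by
  have : Osort σ = ⋂ (i : Fin n), ⋂ (j : Fin n), ⋂ (_ : i < j), {x : Fin n → ℝ | x (σ i) < x (σ j)} := by
    ext x
    simp only [Osort, Set.mem_setOf_eq, Set.mem_iInter, StrictMono]
  rw [this]
  exact MeasurableSet.iInter fun i => MeasurableSet.iInter fun j => MeasurableSet.iInter
    fun _ => measurableSet_lt (measurable_pi_apply _) (measurable_pi_apply _)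

lemma measurableSet_ES (S : Finset (Fin n)) : MeasurableSet (ES S) := by
  have : ES S = ⋂ (j : Fin n), ⋂ (_ : j ∈ S), ⋂ (i : Fin n), ⋂ (_ : i < j),
      {x : Fin n → ℝ | x i < x j} := by
    ext x
    simp only [ES, Set.mem_setOf_eq, Set.mem_iInter]
  rw [this]
  exact MeasurableSet.iInter fun j => MeasurableSet.iInter fun _ => MeasurableSet.iInter fun i =>
    MeasurableSet.iInter fun _ => measurableSet_lt (measurable_pi_apply _) (measurable_pi_apply _)

lemma mp_comp (σ : Equiv.Perm (Fin n)) :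
    MeasurePreserving (fun x : Fin n → ℝ => x ∘ σ)
      (Measure.pi fun _ => μ) (Measure.pi fun _ => μ) := by
  have hmeas : Measurable (fun x : Fin n → ℝ => x ∘ σ) :=
    measurable_pi_lambda _ fun i => measurable_pi_apply (σ i)
  refine ⟨hmeas, ?_⟩
  refine (Measure.pi_eq fun s hs => ?_).symm
  rw [Measure.map_apply hmeas (MeasurableSet.univ_pi hs)]
  have hpre : (fun x : Fin n → ℝ => x ∘ σ) ⁻¹' Set.univ.pi s
      = Set.univ.pi (fun j => s (σ.symm j)) := by
    ext x
    simp only [Set.mem_preimage, Set.mem_pi, Set.mem_univ, forall_true_left, Function.comp]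
    constructor
    · intro h j
      have := h (σ.symm j)
      rwa [σ.apply_symm_apply] at this
    · intro h i
      have := h (σ i)
      rwa [σ.symm_apply_apply] at this
  rw [hpre, Measure.pi_pi]
  exact Equiv.prod_comp σ.symm fun j => μ (s j)

lemma Osort_preimage (σ : Equiv.Perm (Fin n)) :
    Osort σ = (fun x : Fin n → ℝ => x ∘ σ) ⁻¹' (Osort (1 : Equiv.Perm (Fin n))) := by
  ext x
  simp only [Osort, Set.mem_preimage, Set.mem_setOf_eq]
  rfl

lemma Osort_lt_iff {σ : Equiv.Perm (Fin n)} {x : Fin n → ℝ} (hx : x ∈ Osort σ) (i j : Fin n) :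
    x i < x j ↔ σ.symm i < σ.symm j := by
  have h := (hx : StrictMono fun i => x (σ i)).lt_iff_lt (a := σ.symm i) (b := σ.symm j)
  simpa only [σ.apply_symm_apply] using h

lemma injective_of_mem_Osort {σ : Equiv.Perm (Fin n)} {x : Fin n → ℝ} (hx : x ∈ Osort σ) :
    Function.Injective x := by
  intro a b hab
  have h : StrictMono fun i => x (σ i) := hx
  have h2 : σ.symm a = σ.symm b := h.injective (by simpa only [σ.apply_symm_apply] using hab)
  simpa using congrArg σ h2

lemma Osort_disjoint : Set.Pairwise (Set.univ : Set (Equiv.Perm (Fin n)))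
    (Function.onFun Disjoint Osort) := by
  intro σ _ τ _ hne
  rw [Function.onFun, Set.disjoint_left]
  intro x hxσ hxτ
  apply hne
  have h1 : StrictMono (x ∘ σ) := hxσ
  have h2 : StrictMono (x ∘ τ) := hxτ
  have hr : Set.range (x ∘ σ) = Set.range (x ∘ τ) := by
    rw [Set.range_comp, Set.range_comp, Equiv.range_eq_univ, Equiv.range_eq_univ]
  haveI : WellFoundedLT (Fin n) := ⟨Finite.wellFounded_of_trans_of_irrefl _⟩
  have hfeq : (x ∘ σ) = (x ∘ τ) := (h1.range_inj h2).mp hr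
  ext i
  exact congrArg Fin.val (injective_of_mem_Osort hxσ (congrFun hfeq i))

lemma exists_mem_Osort {x : Fin n → ℝ} (hx : Function.Injective x) :
    ∃ σ : Equiv.Perm (Fin n), x ∈ Osort σ := by
  refine ⟨Tuple.sort x, ?_⟩
  have := Tuple.monotone_sort x
  have hsm : StrictMono (x ∘ Tuple.sort x) :=
    this.strictMono_of_injective (hx.comp (Tuple.sort x).injective)
  exact hsm

lemma pi_Osort_eq (σ : Equiv.Perm (Fin n)) :
    Measure.pi (fun _ : Fin n => μ) (Osort σ) =
      Measure.pi (fun _ : Fin n => μ) (Osort (1 : Equiv.Perm (Fin n))) := by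
  rw [Osort_preimage σ]
  exact (mp_comp σ).measure_preimage (measurableSet_Osort _).nullMeasurableSet

lemma pi_Osort_one
    (hties : ∀ a b : Fin n, a ≠ b → Measure.pi (fun _ : Fin n => μ) {x | x a = x b} = 0) :
    Measure.pi (fun _ : Fin n => μ) (Osort (1 : Equiv.Perm (Fin n)))
      = ((Nat.factorial n : ℝ≥0∞))⁻¹ := by
  set ν := Measure.pi (fun _ : Fin n => μ) with hν
  have hcompl : (⋃ σ : Equiv.Perm (Fin n), Osort σ)ᶜ ⊆
      ⋃ (a : Fin n), ⋃ (b : Fin n), ⋃ (_ : a ≠ b), {x : Fin n → ℝ | x a = x b} := by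
    intro x hx
    simp only [Set.mem_compl_iff, Set.mem_iUnion, not_exists] at hx
    have hni : ¬ Function.Injective x := by
      intro hinj
      obtain ⟨σ, hσ⟩ := exists_mem_Osort hinj
      exact hx σ hσ
    rw [Function.not_injective_iff] at hni
    obtain ⟨a, b, hab, hne⟩ := hni
    simp only [Set.mem_iUnion]
    exact ⟨a, b, hne, hab⟩
  have hcompl0 : ν (⋃ σ : Equiv.Perm (Fin n), Osort σ)ᶜ = 0 := by
    refine measure_mono_null hcompl ?_
    refine measure_iUnion_null fun a => measure_iUnion_null fun b => measure_iUnion_null fun hab => ?_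
    exact hties a b hab
  have hU : ν (⋃ σ : Equiv.Perm (Fin n), Osort σ) = 1 := by
    have hle : ν (⋃ σ : Equiv.Perm (Fin n), Osort σ) ≤ 1 := prob_le_one
    have hge : (1 : ℝ≥0∞) ≤ ν (⋃ σ : Equiv.Perm (Fin n), Osort σ) := by
      have : (1 : ℝ≥0∞) = ν Set.univ := (measure_univ).symm
      rw [this]
      calc ν Set.univ ≤ ν ((⋃ σ : Equiv.Perm (Fin n), Osort σ)
            ∪ (⋃ σ : Equiv.Perm (Fin n), Osort σ)ᶜ) := by
              rw [Set.union_compl_self]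
        _ ≤ ν (⋃ σ : Equiv.Perm (Fin n), Osort σ)
            + ν (⋃ σ : Equiv.Perm (Fin n), Osort σ)ᶜ := measure_union_le _ _
        _ = ν (⋃ σ : Equiv.Perm (Fin n), Osort σ) := by rw [hcompl0, add_zero]
    exact le_antisymm hle hge
  have hsum : ν (⋃ σ : Equiv.Perm (Fin n), Osort σ)
      = ∑ σ : Equiv.Perm (Fin n), ν (Osort σ) := by
    rw [measure_iUnion (Set.pairwise_univ.mp Osort_disjoint) (fun σ => measurableSet_Osort σ)]
    exact tsum_fintype _
  have hconst : ∑ σ : Equiv.Perm (Fin n), ν (Osort σ)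
      = (Nat.factorial n : ℝ≥0∞) * ν (Osort (1 : Equiv.Perm (Fin n))) := by
    rw [Finset.sum_congr rfl (fun σ _ => pi_Osort_eq σ), Finset.sum_const, Finset.card_univ,
      Fintype.card_perm, Fintype.card_fin, nsmul_eq_mul]
  have hkey : (Nat.factorial n : ℝ≥0∞) * ν (Osort (1 : Equiv.Perm (Fin n))) = 1 := by
    rw [← hconst, ← hsum, hU]
  have hne : (Nat.factorial n : ℝ≥0∞) ≠ 0 := by
    simp [Nat.factorial_ne_zero]
  have hnetop : (Nat.factorial n : ℝ≥0∞) ≠ ⊤ := by simp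
  calc ν (Osort 1) = ((Nat.factorial n : ℝ≥0∞)⁻¹ * (Nat.factorial n : ℝ≥0∞)) * ν (Osort 1) := by
        rw [ENNReal.inv_mul_cancel hne hnetop, one_mul]
    _ = (Nat.factorial n : ℝ≥0∞)⁻¹ * ((Nat.factorial n : ℝ≥0∞) * ν (Osort 1)) := by
        rw [mul_assoc]
    _ = (Nat.factorial n : ℝ≥0∞)⁻¹ := by rw [hkey, mul_one]

lemma pi_ES
    (hties : ∀ a b : Fin n, a ≠ b → Measure.pi (fun _ : Fin n => μ) {x | x a = x b} = 0)
    (S : Finset (Fin n)) :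
    Measure.pi (fun _ : Fin n => μ) (ES S) = ∏ j ∈ S, (((j : ℕ) : ℝ≥0∞) + 1)⁻¹ := by
  classical
  set ν := Measure.pi (fun _ : Fin n => μ) with hν
  have hUmeas : MeasurableSet (⋃ σ : Equiv.Perm (Fin n), Osort σ) :=
    MeasurableSet.iUnion fun σ => measurableSet_Osort σ
  have hcompl0 : ν (⋃ σ : Equiv.Perm (Fin n), Osort σ)ᶜ = 0 := by
    refine measure_mono_null ?_ (measure_iUnion_null fun a => measure_iUnion_null fun b =>
      measure_iUnion_null fun hab => hties a b hab)
    intro x hx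
    simp only [Set.mem_compl_iff, Set.mem_iUnion, not_exists] at hx
    have hni : ¬ Function.Injective x := by
      intro hinj
      obtain ⟨σ, hσ⟩ := exists_mem_Osort hinj
      exact hx σ hσ
    rw [Function.not_injective_iff] at hni
    obtain ⟨a, b, hab, hne⟩ := hni
    simp only [Set.mem_iUnion]
    exact ⟨a, b, hne, hab⟩
  have hinter : ∀ σ : Equiv.Perm (Fin n), ES S ∩ Osort σ
      = if (∀ j ∈ S, ∀ i, i < j → σ.symm i < σ.symm j) then Osort σ else (∅ : Set (Fin n → ℝ)) := by
    intro σ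
    split_ifs with hP
    · ext x
      simp only [Set.mem_inter_iff, ES, Set.mem_setOf_eq, and_iff_right_iff_imp]
      intro hx j hj i hij
      exact (Osort_lt_iff hx i j).mpr (hP j hj i hij)
    · ext x
      simp only [Set.mem_inter_iff, Set.mem_empty_iff_false, iff_false, not_and]
      intro hES hO
      apply hP
      intro j hj i hij
      exact (Osort_lt_iff hO i j).mp (hES j hj i hij)
  have hsplit : ν (ES S) = ν (ES S ∩ ⋃ σ : Equiv.Perm (Fin n), Osort σ) := by
    have := measure_inter_add_diff (μ := ν) (ES S) hUmeas
    have hdiff : ν (ES S \ ⋃ σ : Equiv.Perm (Fin n), Osort σ) = 0 :=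
      measure_mono_null (fun x hx => hx.2) hcompl0
    rw [hdiff, add_zero] at this
    exact this.symm
  rw [hsplit, Set.inter_iUnion]
  rw [measure_iUnion ?_ (fun σ => (measurableSet_ES S).inter (measurableSet_Osort σ))]
  swap
  · intro σ τ hne
    exact Disjoint.mono Set.inter_subset_right Set.inter_subset_right
      ((Set.pairwise_univ.mp Osort_disjoint) hne)
  rw [tsum_fintype]
  have hterm : ∀ σ : Equiv.Perm (Fin n), ν (ES S ∩ Osort σ)
      = if (∀ j ∈ S, ∀ i, i < j → σ.symm i < σ.symm j) then (Nat.factorial n : ℝ≥0∞)⁻¹ else 0 := by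
    intro σ
    rw [hinter σ]
    split_ifs with hP
    · rw [pi_Osort_eq σ, pi_Osort_one hties]
    · exact measure_empty
  rw [Finset.sum_congr rfl (fun σ _ => hterm σ), Finset.sum_ite, Finset.sum_const_zero, add_zero,
    Finset.sum_const, nsmul_eq_mul]
  -- reindex the filter through inversion
  have hcardfilter : (Finset.univ.filter fun σ : Equiv.Perm (Fin n) =>
        (∀ j ∈ S, ∀ i, i < j → σ.symm i < σ.symm j)).card
      = (Finset.univ.filter fun π : Equiv.Perm (Fin n) => ∀ j ∈ S, ∀ i, i < j → π i < π j).card := by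
    refine Finset.card_bij (fun σ _ => σ.symm) ?_ ?_ ?_
    · intro σ hσ
      simp only [Finset.mem_filter, Finset.mem_univ, true_and] at hσ ⊢
      exact hσ
    · intro σ₁ _ σ₂ _ hss
      have := congrArg Equiv.symm hss
      simpa using this
    · intro π hπ
      simp only [Finset.mem_filter, Finset.mem_univ, true_and] at hπ
      exact ⟨π.symm, by simpa using hπ, by simp⟩
  rw [hcardfilter, count_records S]
  -- final arithmetic
  have hAB : Nat.factorial n = (∏ j ∈ Finset.univ \ S, ((j : ℕ) + 1)) * ∏ j ∈ S, ((j : ℕ) + 1) := by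
    rw [Finset.prod_sdiff (Finset.subset_univ S)]
    exact (prod_univ_fin_succ_eq_factorial).symm
  set B := ∏ j ∈ Finset.univ \ S, ((j : ℕ) + 1) with hB
  set A := ∏ j ∈ S, ((j : ℕ) + 1) with hA
  have hB0 : (B : ℝ≥0∞) ≠ 0 := by
    simp only [ne_eq, Nat.cast_eq_zero, hB]
    exact Finset.prod_ne_zero_iff.mpr fun j _ => Nat.succ_ne_zero _
  have hBtop : (B : ℝ≥0∞) ≠ ⊤ := by simp
  have hA0 : (A : ℝ≥0∞) ≠ 0 := by
    simp only [ne_eq, Nat.cast_eq_zero, hA]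
    exact Finset.prod_ne_zero_iff.mpr fun j _ => Nat.succ_ne_zero _
  rw [hAB]
  push_cast
  rw [ENNReal.mul_inv (Or.inl hB0) (Or.inl hBtop), ← mul_assoc,
    ENNReal.mul_inv_cancel hB0 hBtop, one_mul, hA]
  push_cast
  rw [ENNReal.prod_inv_distrib (fun i _ j _ _ => Or.inl
    (by simp [add_eq_zero]))]

end MeasurePart

end RecordAux

section ProbPart

open MeasureTheory ProbabilityTheory

lemma key_prob {Ω : Type*} [MeasureSpace Ω] [IsProbabilityMeasure (ℙ : Measure Ω)]
    (X : ℕ → Ω → ℝ) (hmeas : ∀ i, Measurable (X i))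
    (hindep : iIndepFun X ℙ)
    (hid : ∀ i j, IdentDistrib (X i) (X j) ℙ ℙ)
    (hcont : ∀ c : ℝ, ℙ {ω | X 1 ω = c} = 0)
    (n : ℕ) (T : Finset ℕ) (hT : T ⊆ Finset.Icc 1 n) :
    ℙ (⋂ j ∈ T, {ω | ∀ m, 1 ≤ m → m < j → X m ω < X j ω})
      = ∏ j ∈ T, ((j : ℝ≥0∞))⁻¹ := by
  classical
  set μ : Measure ℝ := Measure.map (X 1) ℙ with hμ
  haveI : IsProbabilityMeasure μ := Measure.isProbabilityMeasure_map (hmeas 1).aemeasurable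
  have hid_map : ∀ j, Measure.map (X j) ℙ = μ := fun j => (hid j 1).map_eq
  set Y : Ω → (Fin n → ℝ) := fun ω i => X ((i : ℕ) + 1) ω with hY
  have hYmeas : Measurable Y := measurable_pi_lambda _ fun i => hmeas _
  -- the joint law of (X 1, ..., X n) is the product measure
  have hmap : Measure.map Y ℙ = Measure.pi (fun _ : Fin n => μ) := by
    refine (Measure.pi_eq fun s hs => ?_).symm
    rw [Measure.map_apply hYmeas (MeasurableSet.univ_pi hs)]
    set sets : ℕ → Set ℝ := fun j => if h : 1 ≤ j ∧ j ≤ n then s ⟨j - 1, by omega⟩ else Set.univ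
      with hsets
    have hsetsmeas : ∀ j, MeasurableSet (sets j) := by
      intro j
      simp only [hsets]
      split_ifs with hj
      · exact hs _
      · exact MeasurableSet.univ
    have hpre : Y ⁻¹' Set.univ.pi s = ⋂ j ∈ Finset.Icc 1 n, X j ⁻¹' sets j := by
      ext ω
      simp only [Set.mem_preimage, Set.mem_pi, Set.mem_univ, forall_true_left, Set.mem_iInter,
        Finset.mem_Icc]
      constructor
      · intro hL j hj
        have h1 : (⟨j - 1, by omega⟩ : Fin n) = ⟨j - 1, by omega⟩ := rfl
        have := hL ⟨j - 1, by omega⟩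
        simp only [hY] at this
        rw [hsets]
        simp only [dif_pos hj]
        have hidx : j - 1 + 1 = j := by omega
        rw [hidx] at this
        exact this
      · intro hR i
        have hmem : 1 ≤ (i : ℕ) + 1 ∧ (i : ℕ) + 1 ≤ n := ⟨by omega, by omega⟩
        have := hR ((i : ℕ) + 1) hmem
        rw [hsets] at this
        simp only [dif_pos hmem, Nat.add_sub_cancel] at this
        simpa [hY] using this
    rw [hpre, hindep.measure_inter_preimage_eq_mul (Finset.Icc 1 n) (fun j _ => hsetsmeas j)]
    have hfac : ∀ j ∈ Finset.Icc 1 n, ℙ (X j ⁻¹' sets j) = μ (sets j) := by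
      intro j _
      rw [← hid_map j, Measure.map_apply (hmeas j) (hsetsmeas j)]
    rw [Finset.prod_congr rfl hfac]
    refine Finset.prod_bij
      (fun (j : ℕ) (hj : j ∈ Finset.Icc 1 n) =>
        (⟨j - 1, by rw [Finset.mem_Icc] at hj; omega⟩ : Fin n)) ?_ ?_ ?_ ?_
    · intro a _; exact Finset.mem_univ _
    · intro a ha b hb hab
      rw [Finset.mem_Icc] at ha hb
      have : a - 1 = b - 1 := by simpa [Fin.mk_eq_mk] using hab
      omega
    · intro i _
      have hmem : (i : ℕ) + 1 ∈ Finset.Icc 1 n := by rw [Finset.mem_Icc]; omega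
      refine ⟨(i : ℕ) + 1, hmem, ?_⟩
      ext
      simp
    · intro a ha
      rw [Finset.mem_Icc] at ha
      simp only [hsets, dif_pos ha]
  -- no ties
  have hPties : ∀ p q : ℕ, p ≠ q → ℙ {ω | X p ω = X q ω} = 0 := by
    intro p q hpq
    have hind := hindep.indepFun hpq
    have hprod := (indepFun_iff_map_prod_eq_prod_map_map (hmeas p).aemeasurable
      (hmeas q).aemeasurable).mp hind
    have hdiag : MeasurableSet {z : ℝ × ℝ | z.1 = z.2} :=
      measurableSet_eq_fun measurable_fst measurable_snd
    have hpair : Measurable (fun ω => (X p ω, X q ω)) := (hmeas p).prodMk (hmeas q)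
    have h1 : ℙ {ω | X p ω = X q ω}
        = Measure.map (fun ω => (X p ω, X q ω)) ℙ {z : ℝ × ℝ | z.1 = z.2} := by
      rw [Measure.map_apply hpair hdiag]
      rfl
    rw [h1, hprod, Measure.prod_apply hdiag]
    have hone : ∀ x : ℝ, (Measure.map (X q) ℙ) (Prod.mk x ⁻¹' {z : ℝ × ℝ | z.1 = z.2}) = 0 := by
      intro x
      have hxset : (Prod.mk x ⁻¹' {z : ℝ × ℝ | z.1 = z.2}) = {x} := by
        ext y
        simp [eq_comm]
      rw [hxset, hid_map q]
      rw [hμ, Measure.map_apply (hmeas 1) (measurableSet_singleton x)]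
      have : (X 1 ⁻¹' {x}) = {ω | X 1 ω = x} := rfl
      rw [this]
      exact hcont x
    simp only [hone]
    exact lintegral_zero
  have hties : ∀ a b : Fin n, a ≠ b →
      Measure.pi (fun _ : Fin n => μ) {x : Fin n → ℝ | x a = x b} = 0 := by
    intro a b hab
    have hmeasset : MeasurableSet {x : Fin n → ℝ | x a = x b} :=
      measurableSet_eq_fun (measurable_pi_apply a) (measurable_pi_apply b)
    rw [← hmap, Measure.map_apply hYmeas hmeasset]
    have : Y ⁻¹' {x : Fin n → ℝ | x a = x b} = {ω | X ((a : ℕ) + 1) ω = X ((b : ℕ) + 1) ω} := rfl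
    rw [this]
    exact hPties _ _ (by simpa [Fin.val_eq_val] using hab)
  -- the record set
  set S : Finset (Fin n) := T.attach.image
    (fun (j : {x // x ∈ T}) => (⟨(j : ℕ) - 1, by
      have := hT j.2
      rw [Finset.mem_Icc] at this
      omega⟩ : Fin n)) with hS
  have hSmem : ∀ k : Fin n, k ∈ S ↔ ∃ j ∈ T, j - 1 = (k : ℕ) := by
    intro k
    rw [hS]
    simp only [Finset.mem_image, Finset.mem_attach, true_and, Subtype.exists]
    constructor
    · rintro ⟨j, hj, rfl⟩
      exact ⟨j, hj, rfl⟩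
    · rintro ⟨j, hj, hjk⟩
      exact ⟨j, hj, by ext; simp [hjk]⟩
  have hevent : (⋂ j ∈ T, {ω | ∀ m, 1 ≤ m → m < j → X m ω < X j ω}) = Y ⁻¹' RecordAux.ES S := by
    ext ω
    simp only [Set.mem_iInter, Set.mem_setOf_eq, Set.mem_preimage, RecordAux.ES]
    constructor
    · intro hL k hk i hik
      obtain ⟨j, hjT, hjk⟩ := (hSmem k).mp hk
      have hjIcc := hT hjT
      rw [Finset.mem_Icc] at hjIcc
      have h1 := hL j hjT ((i : ℕ) + 1) (by omega) (by omega)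
      have h2 : (k : ℕ) + 1 = j := by omega
      simpa [hY, h2] using h1
    · intro hR j hjT m h1m hmj
      have hjIcc := hT hjT
      rw [Finset.mem_Icc] at hjIcc
      have hk : (⟨j - 1, by omega⟩ : Fin n) ∈ S := (hSmem _).mpr ⟨j, hjT, rfl⟩
      have := hR _ hk ⟨m - 1, by omega⟩ (by simp only [Fin.mk_lt_mk]; omega)
      simp only [hY] at this
      have hm1 : m - 1 + 1 = m := by omega
      have hj1 : j - 1 + 1 = j := by omega
      rwa [hm1, hj1] at this
  rw [hevent, ← Measure.map_apply hYmeas (RecordAux.measurableSet_ES S), hmap,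
    RecordAux.pi_ES hties S]
  rw [hS, Finset.prod_image ?hinj]
  case hinj =>
    intro (x : {x // x ∈ T}) hx (y : {x // x ∈ T}) hy hxy
    have hxIcc := hT x.2
    have hyIcc := hT y.2
    rw [Finset.mem_Icc] at hxIcc hyIcc
    have : (x : ℕ) - 1 = (y : ℕ) - 1 := by simpa [Fin.mk_eq_mk] using hxy
    ext
    omega
  rw [← Finset.prod_attach T (fun j => ((j : ℝ≥0∞))⁻¹)]
  refine Finset.prod_congr rfl fun j _ => ?_
  have hjIcc := hT j.2
  rw [Finset.mem_Icc] at hjIcc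
  congr 1
  have h2 : ((j : ℕ) - 1) + 1 = (j : ℕ) := by omega
  simp only [Fin.val_mk]
  rw [← Nat.cast_one (R := ℝ≥0∞), ← Nat.cast_add, h2]

end ProbPart

open MeasureTheory ProbabilityTheory

theorem record_indicators_iid_indep' {Ω : Type*} [MeasureSpace Ω]
    [IsProbabilityMeasure (ℙ : Measure Ω)]
    (X : ℕ → Ω → ℝ) (hmeas : ∀ i, Measurable (X i))
    (hindep : iIndepFun X ℙ)
    (hid : ∀ i j, IdentDistrib (X i) (X j) ℙ ℙ)
    (hcont : ∀ c : ℝ, ℙ {ω | X 1 ω = c} = 0)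
    (ζ : ℕ → Ω → ℝ)
    (hζ : ∀ j ω, ζ j ω = if ∀ m, 1 ≤ m → m < j → X m ω < X j ω then 1 else 0) :
    ∀ n : ℕ, 1 ≤ n → ∀ h : ℕ → ℝ → ℝ,
      ∫ ω, ∏ j ∈ Finset.Icc 1 n, h j (ζ j ω) ∂ℙ
        = ∏ j ∈ Finset.Icc 1 n, ∫ ω, h j (ζ j ω) ∂ℙ := by
  intro n hn h
  classical
  set A : ℕ → Set Ω := fun j => {ω | ∀ m, 1 ≤ m → m < j → X m ω < X j ω} with hA
  have hAmeas : ∀ j, MeasurableSet (A j) := by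
    intro j
    have hrw : A j = ⋂ (m : ℕ), ⋂ (_ : 1 ≤ m), ⋂ (_ : m < j), {ω | X m ω < X j ω} := by
      ext ω
      simp only [hA, Set.mem_setOf_eq, Set.mem_iInter]
    rw [hrw]
    exact MeasurableSet.iInter fun m => MeasurableSet.iInter fun _ => MeasurableSet.iInter
      fun _ => measurableSet_lt (hmeas m) (hmeas j)
  have hkey : ∀ T ⊆ Finset.Icc 1 n, ℙ (⋂ j ∈ T, A j) = ∏ j ∈ T, ((j : ℝ≥0∞))⁻¹ :=
    fun T hT => key_prob X hmeas hindep hid hcont n T hT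
  set r : ℕ → ℝ := fun j => (ℙ (A j)).toReal with hr
  have hrval : ∀ j ∈ Finset.Icc 1 n, r j = ((j : ℝ≥0∞)⁻¹).toReal := by
    intro j hj
    have hsing := hkey {j} (by simpa using hj)
    simp only [Finset.mem_singleton, Set.iInter_iInter_eq_left, Finset.prod_singleton] at hsing
    rw [hr]
    simp only
    rw [hsing]
  have hrkey : ∀ T ⊆ Finset.Icc 1 n, (ℙ (⋂ j ∈ T, A j)).toReal = ∏ j ∈ T, r j := by
    intro T hT
    rw [hkey T hT, ENNReal.toReal_prod]
    exact (Finset.prod_congr rfl fun j hj => (hrval j (hT hj)).symm)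
  have hfac : ∀ j ω, h j (ζ j ω)
      = (A j).indicator (fun _ => h j 1 - h j 0) ω + h j 0 := by
    intro j ω
    rw [hζ j ω]
    by_cases hω : ω ∈ A j
    · have hω' : ∀ m, 1 ≤ m → m < j → X m ω < X j ω := hω
      rw [Set.indicator_of_mem hω, if_pos hω']
      ring
    · have hω' : ¬ ∀ m, 1 ≤ m → m < j → X m ω < X j ω := hω
      rw [Set.indicator_of_notMem hω, if_neg hω']
      ring
  have hIint : ∀ j, ∫ ω, h j (ζ j ω) ∂ℙ = (h j 1 - h j 0) * r j + h j 0 := by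
    intro j
    have hrw : (fun ω => h j (ζ j ω))
        = fun ω => (A j).indicator (fun _ => h j 1 - h j 0) ω + h j 0 := funext (hfac j)
    rw [hrw, integral_add ((integrable_const _).indicator (hAmeas j)) (integrable_const _),
      integral_const, integral_indicator_const _ (hAmeas j)]
    simp only [smul_eq_mul, measureReal_def, measure_univ, ENNReal.toReal_one, one_mul, hr]
    ring
  have hprodpt : ∀ ω, ∏ j ∈ Finset.Icc 1 n, h j (ζ j ω)
      = ∑ T ∈ (Finset.Icc 1 n).powerset,
          (⋂ j ∈ T, A j).indicator
            (fun _ => (∏ j ∈ T, (h j 1 - h j 0)) * ∏ j ∈ Finset.Icc 1 n \ T, h j 0) ω := by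
    intro ω
    rw [Finset.prod_congr rfl fun j _ => hfac j ω, Finset.prod_add]
    refine Finset.sum_congr rfl fun T hT => ?_
    by_cases hω : ω ∈ ⋂ j ∈ T, A j
    · rw [Set.indicator_of_mem hω]
      congr 1
      refine Finset.prod_congr rfl fun j hj => ?_
      rw [Set.indicator_of_mem (Set.mem_iInter₂.mp hω j hj)]
    · rw [Set.indicator_of_notMem hω]
      obtain ⟨j, hjT, hj⟩ : ∃ j ∈ T, ω ∉ A j := by
        by_contra hc
        push_neg at hc
        exact hω (Set.mem_iInter₂.mpr hc)
      rw [Finset.prod_eq_zero hjT (Set.indicator_of_notMem hj _), zero_mul]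
  have hTmeas : ∀ T : Finset ℕ, MeasurableSet (⋂ j ∈ T, A j) :=
    fun T => Finset.measurableSet_biInter T fun j _ => hAmeas j
  calc ∫ ω, ∏ j ∈ Finset.Icc 1 n, h j (ζ j ω) ∂ℙ
      = ∫ ω, ∑ T ∈ (Finset.Icc 1 n).powerset,
          (⋂ j ∈ T, A j).indicator
            (fun _ => (∏ j ∈ T, (h j 1 - h j 0)) * ∏ j ∈ Finset.Icc 1 n \ T, h j 0) ω ∂ℙ := by
        exact integral_congr_ae (Filter.Eventually.of_forall fun ω => hprodpt ω)
    _ = ∑ T ∈ (Finset.Icc 1 n).powerset, ∫ ω,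
          (⋂ j ∈ T, A j).indicator
            (fun _ => (∏ j ∈ T, (h j 1 - h j 0)) * ∏ j ∈ Finset.Icc 1 n \ T, h j 0) ω ∂ℙ := by
        exact integral_finset_sum _ fun T _ => (integrable_const _).indicator (hTmeas T)
    _ = ∑ T ∈ (Finset.Icc 1 n).powerset,
          (∏ j ∈ T, ((h j 1 - h j 0) * r j)) * ∏ j ∈ Finset.Icc 1 n \ T, h j 0 := by
        refine Finset.sum_congr rfl fun T hT => ?_
        rw [integral_indicator_const _ (hTmeas T), smul_eq_mul, measureReal_def,
          hrkey T (Finset.mem_powerset.mp hT), Finset.prod_mul_distrib]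
        ring
    _ = ∏ j ∈ Finset.Icc 1 n, ((h j 1 - h j 0) * r j + h j 0) := (Finset.prod_add _ _ _).symm
    _ = ∏ j ∈ Finset.Icc 1 n, ∫ ω, h j (ζ j ω) ∂ℙ := by
        exact Finset.prod_congr rfl fun j _ => (hIint j).symm


/-- For i.i.d. real random variables with a common continuous distribution function,
the record indicators `ζ 1, ..., ζ n` are mutually independent, in the sense that
for all functions `h j`, `E[∏ j, h j (ζ j)] = ∏ j, E[h j (ζ j)]`. -/
theorem record_indicators_iid_indep {Ω : Type*} [MeasureSpace Ω]
    [IsProbabilityMeasure (ℙ : Measure Ω)]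
    (X : ℕ → Ω → ℝ) (hmeas : ∀ i, Measurable (X i))
    (hindep : iIndepFun X ℙ)
    (hid : ∀ i j, IdentDistrib (X i) (X j) ℙ ℙ)
    (hcont : ∀ c : ℝ, ℙ {ω | X 1 ω = c} = 0)
    (ζ : ℕ → Ω → ℝ)
    (hζ : ∀ j ω, ζ j ω = if ∀ m, 1 ≤ m → m < j → X m ω < X j ω then 1 else 0) :
    ∀ n : ℕ, 1 ≤ n → ∀ h : ℕ → ℝ → ℝ,
      ∫ ω, ∏ j ∈ Finset.Icc 1 n, h j (ζ j ω) ∂ℙ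
        = ∏ j ∈ Finset.Icc 1 n, ∫ ω, h j (ζ j ω) ∂ℙ :=
  record_indicators_iid_indep' X hmeas hindep hid hcont ζ hζ
end

section
/- For a sequence of i.i.d. real random variables with continuous common distribution, ℙ(ζ_i = 1, ζ_j = 1) = 1/(ij) for all 1 ≤ i < j, i.e., the joint probability of records at times i and j factorizes. -/
open MeasureTheory ProbabilityTheory
open scoped ENNReal

/-- The joint law of finitely many of the `X k` is the product measure. -/
lemma record_aux_law_pi {Ω : Type*} [MeasureSpace Ω]
    [IsProbabilityMeasure (ℙ : Measure Ω)]
    (X : ℕ → Ω → ℝ) (hmeas : ∀ i, Measurable (X i))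
    (hindep : iIndepFun X ℙ)
    (hid : ∀ i j, IdentDistrib (X i) (X j) ℙ ℙ) (j : ℕ) :
    (ℙ : Measure Ω).map (fun ω (k : Fin j) => X ((k : ℕ) + 1) ω)
      = Measure.pi (fun _ : Fin j => (ℙ : Measure Ω).map (X 1)) := by
  classical
  haveI : IsProbabilityMeasure ((ℙ : Measure Ω).map (X 1)) :=
    Measure.isProbabilityMeasure_map (hmeas 1).aemeasurable
  have hV : Measurable (fun ω (k : Fin j) => X ((k : ℕ) + 1) ω) :=
    measurable_pi_lambda _ fun k => hmeas _
  refine (Measure.pi_eq fun s hs => ?_).symm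
  rw [Measure.map_apply hV (MeasurableSet.univ_pi hs)]
  set sets : ℕ → Set ℝ :=
    fun m => if h : 0 < m ∧ m ≤ j then s ⟨m - 1, by omega⟩ else Set.univ with hsetsdef
  have hsets : ∀ k : Fin j, sets ((k : ℕ) + 1) = s k := by
    intro k
    have hk : 0 < (k : ℕ) + 1 ∧ (k : ℕ) + 1 ≤ j := ⟨Nat.succ_pos _, by have := k.isLt; omega⟩
    rw [hsetsdef]
    dsimp only
    rw [dif_pos hk]
    congr 1
  have hsetsm : ∀ m, MeasurableSet (sets m) := by
    intro m
    rw [hsetsdef]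
    dsimp only
    split_ifs
    · exact hs _
    · exact MeasurableSet.univ
  have hpre : (fun ω (k : Fin j) => X ((k : ℕ) + 1) ω) ⁻¹' Set.pi Set.univ s
      = ⋂ m ∈ Finset.image (fun k : Fin j => (k : ℕ) + 1) Finset.univ, X m ⁻¹' sets m := by
    ext ω
    simp only [Set.mem_preimage, Set.mem_pi, Set.mem_univ, forall_true_left, Set.mem_iInter,
      Finset.mem_image, Finset.mem_univ, true_and, forall_exists_index]
    constructor
    · rintro h m k rfl
      rw [hsets k]
      exact h k
    · intro h k
      rw [← hsets k]
      exact h _ k rfl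
  rw [hpre, hindep.measure_inter_preimage_eq_mul _ (fun m _ => hsetsm m),
    Finset.prod_image (by intro a _ b _ h; exact Fin.ext (by simp only at h; omega))]
  refine Finset.prod_congr rfl fun k _ => ?_
  rw [hsets k, ← (hid ((k : ℕ) + 1) 1).map_eq, Measure.map_apply (hmeas _) (hs k)]

/-- Permutation invariance of the product measure. -/
lemma record_aux_perm {n : ℕ} (μ : Measure ℝ) [IsProbabilityMeasure μ]
    (e : Equiv.Perm (Fin n)) {S : Set (Fin n → ℝ)} (hS : MeasurableSet S) :
    Measure.pi (fun _ : Fin n => μ) ((fun v => v ∘ e) ⁻¹' S)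
      = Measure.pi (fun _ : Fin n => μ) S := by
  have hT : (fun v : Fin n → ℝ => v ∘ e)
      = ⇑(MeasurableEquiv.piCongrLeft (fun _ : Fin n => ℝ) e.symm) := by
    funext v
    refine funext fun m => ?_
    show v (e m) = (MeasurableEquiv.piCongrLeft (fun _ : Fin n => ℝ) e.symm) v m
    rw [MeasurableEquiv.coe_piCongrLeft]
    conv_rhs => rw [show m = e.symm (e m) from (e.symm_apply_apply m).symm]
    rw [Equiv.piCongrLeft_apply_apply]
  rw [hT]
  exact (measurePreserving_piCongrLeft (fun _ => μ) e.symm).measure_preimage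
    hS.nullMeasurableSet

set_option maxHeartbeats 1000000 in
/-- For i.i.d. real random variables with continuous common distribution, the joint
probability of records at times `i < j` factorizes: `ℙ(ζ i = 1, ζ j = 1) = 1/(i*j)`. -/
theorem record_joint_prob {Ω : Type*} [MeasureSpace Ω]
    [IsProbabilityMeasure (ℙ : Measure Ω)]
    (X : ℕ → Ω → ℝ) (hmeas : ∀ i, Measurable (X i))
    (hindep : iIndepFun X ℙ)
    (hid : ∀ i j, IdentDistrib (X i) (X j) ℙ ℙ)
    (hcont : ∀ c : ℝ, ℙ {ω | X 1 ω = c} = 0) :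
    ∀ i j : ℕ, 1 ≤ i → i < j →
      ℙ {ω | (∀ m, 1 ≤ m → m < i → X m ω < X i ω) ∧
             (∀ m, 1 ≤ m → m < j → X m ω < X j ω)}
        = ((i : ℝ≥0∞) * j)⁻¹ := by
  intro i j hi hij
  classical
  haveI : IsProbabilityMeasure ((ℙ : Measure Ω).map (X 1)) :=
    Measure.isProbabilityMeasure_map (hmeas 1).aemeasurable
  set μ : Measure ℝ := (ℙ : Measure Ω).map (X 1) with hμdef
  set ν : Measure (Fin j → ℝ) := Measure.pi (fun _ => μ) with hνdef
  haveI : IsProbabilityMeasure ν := by rw [hνdef]; infer_instance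
  set V : Ω → (Fin j → ℝ) := fun ω (k : Fin j) => X ((k : ℕ) + 1) ω with hVdef
  have hV : Measurable V := measurable_pi_lambda _ fun k => hmeas _
  have hmapV : (ℙ : Measure Ω).map V = ν := record_aux_law_pi X hmeas hindep hid j
  -- atoms of μ are null
  have hatom : ∀ c : ℝ, μ {c} = 0 := by
    intro c
    rw [hμdef, Measure.map_apply (hmeas 1) (measurableSet_singleton c)]
    have : X 1 ⁻¹' {c} = {ω | X 1 ω = c} := by ext ω; simp
    rw [this]
    exact hcont c
  -- special indices
  have hj1 : 1 ≤ j := le_trans hi hij.le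
  set kl : Fin j := ⟨j - 1, by omega⟩ with hkl
  set k0 : Fin j := ⟨i - 1, by omega⟩ with hk0
  -- the "strict max at k" events
  set Amax : Fin j → Set (Fin j → ℝ) :=
    fun k => {v | ∀ m, m ≠ k → v m < v k} with hAmax
  have hAmeas : ∀ k, MeasurableSet (Amax k) := by
    intro k
    have : Amax k = ⋂ m, {v : Fin j → ℝ | m ≠ k → v m < v k} := by
      ext v; simp [hAmax, Set.mem_iInter]
    rw [this]
    refine MeasurableSet.iInter fun m => ?_
    by_cases h : m = k
    · have : {v : Fin j → ℝ | m ≠ k → v m < v k} = Set.univ := by ext v; simp [h]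
      rw [this]; exact MeasurableSet.univ
    · have : {v : Fin j → ℝ | m ≠ k → v m < v k} = {v | v m < v k} := by ext v; simp [h]
      rw [this]
      exact measurableSet_lt (measurable_pi_apply _) (measurable_pi_apply _)
  have hApre : ∀ (e : Equiv.Perm (Fin j)) (k : Fin j),
      (fun v : Fin j → ℝ => v ∘ e) ⁻¹' Amax k = Amax (e k) := by
    intro e k
    ext v
    simp only [hAmax, Set.mem_preimage, Set.mem_setOf_eq, Function.comp_apply]
    constructor
    · intro h m hm
      have h1 : e.symm m ≠ k := by
        intro hc
        exact hm ((e.apply_symm_apply m).symm.trans (congrArg e hc))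
      have := h (e.symm m) h1
      rwa [e.apply_symm_apply] at this
    · intro h m hm
      exact h (e m) (fun hc => hm (e.injective hc))
  have hAeq : ∀ k, ν (Amax k) = ν (Amax kl) := by
    intro k
    have h := record_aux_perm μ (Equiv.swap k kl) (hAmeas k)
    rw [hApre (Equiv.swap k kl) k, Equiv.swap_apply_left] at h
    rw [← hνdef] at h
    exact h.symm
  -- the ties event is null
  set Dg : Set (Fin j → ℝ) :=
    ⋃ (a : Fin j) (b : Fin j) (_ : a ≠ b), {v | v a = v b} with hDg
  have hDmeas : MeasurableSet Dg := by
    refine MeasurableSet.iUnion fun a => MeasurableSet.iUnion fun b =>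
      MeasurableSet.iUnion fun _ => ?_
    exact measurableSet_eq_fun (measurable_pi_apply a) (measurable_pi_apply b)
  have hD0 : ν Dg = 0 := by
    rw [hDg]
    refine measure_iUnion_null fun a => measure_iUnion_null fun b =>
      measure_iUnion_null fun hab => ?_
    have hset : MeasurableSet {v : Fin j → ℝ | v a = v b} :=
      measurableSet_eq_fun (measurable_pi_apply a) (measurable_pi_apply b)
    rw [← hmapV, Measure.map_apply hV hset]
    have hpre : V ⁻¹' {v : Fin j → ℝ | v a = v b}
        = {ω | X ((a : ℕ) + 1) ω = X ((b : ℕ) + 1) ω} := rfl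
    rw [hpre]
    have hne : ((a : ℕ) + 1) ≠ ((b : ℕ) + 1) := by
      intro hc; exact hab (Fin.ext (Nat.succ_injective hc))
    have hd : IndepFun (X ((a : ℕ) + 1)) (X ((b : ℕ) + 1)) ℙ := hindep.indepFun hne
    have hpair := (indepFun_iff_map_prod_eq_prod_map_map (hmeas _).aemeasurable
      (hmeas _).aemeasurable).mp hd
    have hdm : MeasurableSet {p : ℝ × ℝ | p.1 = p.2} :=
      measurableSet_eq_fun measurable_fst measurable_snd
    have : {ω | X ((a : ℕ) + 1) ω = X ((b : ℕ) + 1) ω}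
        = (fun ω => (X ((a : ℕ) + 1) ω, X ((b : ℕ) + 1) ω)) ⁻¹' {p : ℝ × ℝ | p.1 = p.2} := rfl
    rw [this, ← Measure.map_apply ((hmeas _).prodMk (hmeas _)) hdm, hpair,
      (hid ((a : ℕ) + 1) 1).map_eq, (hid ((b : ℕ) + 1) 1).map_eq, ← hμdef,
      Measure.prod_apply hdm]
    have hzero : ∀ x : ℝ, μ (Prod.mk x ⁻¹' {p : ℝ × ℝ | p.1 = p.2}) = 0 := by
      intro x
      have : Prod.mk x ⁻¹' {p : ℝ × ℝ | p.1 = p.2} = {x} := by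
        ext y; simp [eq_comm]
      rw [this]
      exact hatom x
    simp [hatom]
  -- each Amax k has measure 1/j
  have hAsum : ∑ k : Fin j, ν (Amax k) = 1 := by
    haveI : NeZero j := ⟨by omega⟩
    have hdisj : Pairwise (Function.onFun Disjoint Amax) := by
      intro k k' hkk'
      rw [Function.onFun, Set.disjoint_left]
      intro v hv hv'
      have h1 : v k' < v k := hv k' (Ne.symm hkk')
      have h2 : v k < v k' := hv' k hkk'
      exact absurd h1 (not_lt.mpr h2.le)
    have hUnion : ν (⋃ k, Amax k) = 1 := by
      refine le_antisymm prob_le_one ?_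
      have hsub : (Set.univ : Set (Fin j → ℝ)) ⊆ (⋃ k, Amax k) ∪ Dg := by
        intro v _
        by_cases hv : v ∈ Dg
        · exact Or.inr hv
        · left
          obtain ⟨k, -, hk⟩ := Finset.exists_max_image Finset.univ v Finset.univ_nonempty
          refine Set.mem_iUnion.mpr ⟨k, fun m hm => ?_⟩
          refine lt_of_le_of_ne (hk m (Finset.mem_univ m)) fun he => ?_
          exact hv (Set.mem_iUnion.mpr ⟨m, Set.mem_iUnion.mpr ⟨k,
            Set.mem_iUnion.mpr ⟨hm, he⟩⟩⟩)
      calc (1 : ℝ≥0∞) = ν Set.univ := (measure_univ).symm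
        _ ≤ ν ((⋃ k, Amax k) ∪ Dg) := measure_mono hsub
        _ ≤ ν (⋃ k, Amax k) + ν Dg := measure_union_le _ _
        _ = ν (⋃ k, Amax k) := by rw [hD0, add_zero]
    rw [← tsum_fintype (L := SummationFilter.unconditional _), ← measure_iUnion hdisj hAmeas, hUnion]
  have hj0 : (j : ℝ≥0∞) ≠ 0 := by
    simp only [ne_eq, Nat.cast_eq_zero]; omega
  have hjt : (j : ℝ≥0∞) ≠ ⊤ := ENNReal.natCast_ne_top j
  have hAkl : ν (Amax kl) = (j : ℝ≥0∞)⁻¹ := by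
    have hmul : (j : ℝ≥0∞) * ν (Amax kl) = 1 := by
      calc (j : ℝ≥0∞) * ν (Amax kl)
          = ∑ _k : Fin j, ν (Amax kl) := by
            rw [Finset.sum_const, Finset.card_univ, Fintype.card_fin, nsmul_eq_mul]
        _ = ∑ k : Fin j, ν (Amax k) := Finset.sum_congr rfl fun k _ => (hAeq k).symm
        _ = 1 := hAsum
    calc ν (Amax kl) = (j : ℝ≥0∞)⁻¹ * ((j : ℝ≥0∞) * ν (Amax kl)) := by
          rw [← mul_assoc, ENNReal.inv_mul_cancel hj0 hjt, one_mul]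
      _ = (j : ℝ≥0∞)⁻¹ := by rw [hmul, mul_one]
    -- the joint-record events
  set Cf : Fin j → Set (Fin j → ℝ) :=
    fun k => {v | ∀ m : Fin j, (m : ℕ) < i → m ≠ k → v m < v k} with hCf
  set Bm : Fin j → Set (Fin j → ℝ) := fun k => Cf k ∩ Amax kl with hBm
  have hCmeas : ∀ k, MeasurableSet (Cf k) := by
    intro k
    have hrw : Cf k = ⋂ m : Fin j, {v : Fin j → ℝ | (m : ℕ) < i → m ≠ k → v m < v k} := by
      ext v; simp [hCf, Set.mem_iInter]
    rw [hrw]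
    refine MeasurableSet.iInter fun m => ?_
    by_cases h1 : (m : ℕ) < i
    · by_cases h2 : m = k
      · have : {v : Fin j → ℝ | (m : ℕ) < i → m ≠ k → v m < v k} = Set.univ := by
          ext v; simp [h2]
        rw [this]; exact MeasurableSet.univ
      · have : {v : Fin j → ℝ | (m : ℕ) < i → m ≠ k → v m < v k} = {v | v m < v k} := by
          ext v; simp [h1, h2]
        rw [this]; exact measurableSet_lt (measurable_pi_apply _) (measurable_pi_apply _)
    · have : {v : Fin j → ℝ | (m : ℕ) < i → m ≠ k → v m < v k} = Set.univ := by
        ext v; simp [h1]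
      rw [this]; exact MeasurableSet.univ
  have hBmeas : ∀ k, MeasurableSet (Bm k) := fun k => (hCmeas k).inter (hAmeas kl)
  have hBeq : ∀ k k' : Fin j, (k : ℕ) < i → (k' : ℕ) < i → ν (Bm k) = ν (Bm k') := by
    intro k k' hk hk'
    set e := Equiv.swap k k' with he
    have hswap : ∀ m, e (e m) = m := by
      intro m
      conv_rhs => rw [← (Equiv.swap k k').symm_apply_apply m]
      rw [Equiv.symm_swap, he]
    have hekk : e k = k' := Equiv.swap_apply_left k k'
    have hekk' : e k' = k := Equiv.swap_apply_right k k'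
    have hekl : e kl = kl := by
      have h1 : kl ≠ k := by
        intro hc
        have hcv := congrArg Fin.val hc
        rw [hkl] at hcv
        dsimp at hcv
        omega
      have h2 : kl ≠ k' := by
        intro hc
        have hcv := congrArg Fin.val hc
        rw [hkl] at hcv
        dsimp at hcv
        omega
      exact Equiv.swap_apply_of_ne_of_ne h1 h2
    have hval : ∀ m : Fin j, ((e m : Fin j) : ℕ) < i ↔ (m : ℕ) < i := by
      intro m
      rcases eq_or_ne m k with rfl | h1
      · rw [hekk]; exact ⟨fun _ => hk, fun _ => hk'⟩
      · rcases eq_or_ne m k' with rfl | h2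
        · rw [hekk']; exact ⟨fun _ => hk', fun _ => hk⟩
        · rw [he, Equiv.swap_apply_of_ne_of_ne h1 h2]
    have hnek : ∀ m : Fin j, e m ≠ k ↔ m ≠ k' := by
      intro m
      constructor
      · intro h hc; rw [hc, hekk'] at h; exact h rfl
      · intro h hc
        have h2 : m = e k := (hswap m).symm.trans (congrArg e hc)
        rw [hekk] at h2
        exact h h2
    have hnek' : ∀ m : Fin j, e m ≠ k' ↔ m ≠ k := by
      intro m
      constructor
      · intro h hc; rw [hc, hekk] at h; exact h rfl
      · intro h hc
        have h2 : m = e k' := (hswap m).symm.trans (congrArg e hc)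
        rw [hekk'] at h2
        exact h h2
    have hpreB : (fun v : Fin j → ℝ => v ∘ e) ⁻¹' Bm k = Bm k' := by
      rw [hBm]
      dsimp only
      rw [Set.preimage_inter]
      have hpart1 : (fun v : Fin j → ℝ => v ∘ e) ⁻¹' Cf k = Cf k' := by
        ext v
        simp only [hCf, Set.mem_preimage, Set.mem_setOf_eq, Function.comp_apply]
        constructor
        · intro h m hm hmne
          have := h (e m) ((hval m).mpr hm) ((hnek m).mpr hmne)
          rwa [hswap m, hekk] at this
        · intro h m hm hmne
          rw [hekk]
          exact h (e m) ((hval m).mpr hm) ((hnek' m).mpr hmne)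
      have hpart2 : (fun v : Fin j → ℝ => v ∘ e) ⁻¹' Amax kl = Amax kl := by
        rw [hApre e kl, hekl]
      rw [hpart1, hpart2]
    have hp := record_aux_perm μ e (hBmeas k)
    rw [hpreB, ← hνdef] at hp
    exact hp.symm
  haveI : NeZero i := ⟨by omega⟩
  set tk : Fin i → Fin j := fun t => ⟨(t : ℕ), lt_trans t.isLt hij⟩ with htk
  have hBdisj : Pairwise (Function.onFun Disjoint fun t : Fin i => Bm (tk t)) := by
    intro t t' htt'
    rw [Function.onFun, Set.disjoint_left]
    intro v hv hv'
    have hne : tk t ≠ tk t' := by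
      intro hc
      have hcv := congrArg Fin.val hc
      exact htt' (Fin.ext hcv)
    have h1 : v (tk t') < v (tk t) := hv.1 (tk t') t'.isLt (Ne.symm hne)
    have h2 : v (tk t) < v (tk t') := hv'.1 (tk t) t.isLt hne
    exact absurd h1 (not_lt.mpr h2.le)
  have hBApre : ∀ t : Fin i, Bm (tk t) ⊆ Amax kl := fun t => Set.inter_subset_right
  have hBUnion : ν (⋃ t : Fin i, Bm (tk t)) = ν (Amax kl) := by
    refine le_antisymm (measure_mono (Set.iUnion_subset hBApre)) ?_
    have hsub : Amax kl ⊆ (⋃ t : Fin i, Bm (tk t)) ∪ Dg := by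
      intro v hvA
      by_cases hv : v ∈ Dg
      · exact Or.inr hv
      · left
        obtain ⟨t, -, ht⟩ := Finset.exists_max_image Finset.univ
          (fun t : Fin i => v (tk t)) Finset.univ_nonempty
        refine Set.mem_iUnion.mpr ⟨t, ⟨fun m hm hmne => ?_, hvA⟩⟩
        have hm' : m = tk ⟨(m : ℕ), hm⟩ := Fin.ext rfl
        have hle : v m ≤ v (tk t) := by
          rw [hm']; exact ht _ (Finset.mem_univ _)
        refine lt_of_le_of_ne hle fun heq => ?_
        exact hv (Set.mem_iUnion.mpr ⟨m, Set.mem_iUnion.mpr ⟨tk t,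
          Set.mem_iUnion.mpr ⟨hmne, heq⟩⟩⟩)
    calc ν (Amax kl) ≤ ν ((⋃ t : Fin i, Bm (tk t)) ∪ Dg) := measure_mono hsub
      _ ≤ ν (⋃ t : Fin i, Bm (tk t)) + ν Dg := measure_union_le _ _
      _ = ν (⋃ t : Fin i, Bm (tk t)) := by rw [hD0, add_zero]
  have hi0 : (i : ℝ≥0∞) ≠ 0 := by simp only [ne_eq, Nat.cast_eq_zero]; omega
  have hit : (i : ℝ≥0∞) ≠ ⊤ := ENNReal.natCast_ne_top i
  have hk0i : ((k0 : Fin j) : ℕ) < i := by rw [hk0]; dsimp; omega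
  have hBval : ν (Bm k0) = ((i : ℝ≥0∞) * j)⁻¹ := by
    have hmul : (i : ℝ≥0∞) * ν (Bm k0) = (j : ℝ≥0∞)⁻¹ := by
      calc (i : ℝ≥0∞) * ν (Bm k0)
          = ∑ _t : Fin i, ν (Bm k0) := by
            rw [Finset.sum_const, Finset.card_univ, Fintype.card_fin, nsmul_eq_mul]
        _ = ∑ t : Fin i, ν (Bm (tk t)) := Finset.sum_congr rfl fun t _ =>
            hBeq k0 (tk t) hk0i t.isLt
        _ = ν (⋃ t : Fin i, Bm (tk t)) := by
            rw [measure_iUnion hBdisj (fun t => hBmeas (tk t)), tsum_fintype]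
        _ = ν (Amax kl) := hBUnion
        _ = (j : ℝ≥0∞)⁻¹ := hAkl
    have hfin : ν (Bm k0) = (i : ℝ≥0∞)⁻¹ * (j : ℝ≥0∞)⁻¹ := by
      calc ν (Bm k0) = (i : ℝ≥0∞)⁻¹ * ((i : ℝ≥0∞) * ν (Bm k0)) := by
            rw [← mul_assoc, ENNReal.inv_mul_cancel hi0 hit, one_mul]
        _ = (i : ℝ≥0∞)⁻¹ * (j : ℝ≥0∞)⁻¹ := by rw [hmul]
    rw [hfin, ← ENNReal.mul_inv (Or.inl hi0) (Or.inl hit)]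
  have hk0v : ((k0 : Fin j) : ℕ) + 1 = i := by rw [hk0]; dsimp; omega
  have hklv : ((kl : Fin j) : ℕ) + 1 = j := by rw [hkl]; dsimp; omega
  have hEV : {ω | (∀ m, 1 ≤ m → m < i → X m ω < X i ω) ∧
      (∀ m, 1 ≤ m → m < j → X m ω < X j ω)} = V ⁻¹' Bm k0 := by
    ext ω
    simp only [Set.mem_setOf_eq, Set.mem_preimage, hBm, hCf, hAmax, Set.mem_inter_iff, hVdef]
    constructor
    · rintro ⟨h1, h2⟩
      constructor
      · intro m hm hmne
        have hmv : (m : ℕ) ≠ i - 1 := by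
          intro hc
          exact hmne (Fin.ext (by rw [hk0]; exact hc))
        show X ((m : ℕ) + 1) ω < X (((k0 : Fin j) : ℕ) + 1) ω
        rw [hk0v]
        exact h1 _ (by omega) (by omega)
      · intro m hmne
        have hmv : (m : ℕ) ≠ j - 1 := by
          intro hc
          exact hmne (Fin.ext (by rw [hkl]; exact hc))
        show X ((m : ℕ) + 1) ω < X (((kl : Fin j) : ℕ) + 1) ω
        rw [hklv]
        exact h2 _ (by omega) (by have := m.isLt; omega)
    · rintro ⟨h1, h2⟩
      constructor
      · intro m hm1 hm2
        have hmne : (⟨m - 1, by omega⟩ : Fin j) ≠ k0 := by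
          intro hc
          have hcv : m - 1 = i - 1 := congrArg Fin.val hc
          omega
        have h3 : X (m - 1 + 1) ω < X (i - 1 + 1) ω :=
          h1 ⟨m - 1, by omega⟩ (show m - 1 < i by omega) hmne
        have hm' : m - 1 + 1 = m := by omega
        have hi' : i - 1 + 1 = i := by omega
        rwa [hm', hi'] at h3
      · intro m hm1 hm2
        have hmne : (⟨m - 1, by omega⟩ : Fin j) ≠ kl := by
          intro hc
          have hcv : m - 1 = j - 1 := congrArg Fin.val hc
          omega
        have h3 : X (m - 1 + 1) ω < X (j - 1 + 1) ω := h2 ⟨m - 1, by omega⟩ hmne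
        have hm' : m - 1 + 1 = m := by omega
        have hj' : j - 1 + 1 = j := by omega
        rwa [hm', hj'] at h3
  calc ℙ {ω | (∀ m, 1 ≤ m → m < i → X m ω < X i ω) ∧
      (∀ m, 1 ≤ m → m < j → X m ω < X j ω)}
      = ℙ (V ⁻¹' Bm k0) := by rw [hEV]
    _ = ((ℙ : Measure Ω).map V) (Bm k0) := (Measure.map_apply hV (hBmeas k0)).symm
    _ = ν (Bm k0) := by rw [hmapV]
    _ = ((i : ℝ≥0∞) * j)⁻¹ := hBval
end

section
/- For i.i.d. ℝ^d-valued random vectors whose coordinates are i.i.d. with a continuous distribution, the expected number of multivariate records among the first n observations equals Σ_{j=1}^n 1/j^d, which converges as n → ∞ for d ≥ 2; hence by Borel–Cantelli-type reasoning the total number of multivariate records is almost surely finite when d ≥ 2. -/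
open MeasureTheory ProbabilityTheory
open scoped ENNReal Classical


lemma my_reindex {Ω ι κ β : Type*} [MeasurableSpace Ω] [mβ : MeasurableSpace β]
    {μ : Measure Ω} {f : ι → Ω → β} (h : iIndepFun f μ)
    {e : κ → ι} (he : Function.Injective e) :
    iIndepFun (fun k => f (e k)) μ := by
  rw [iIndepFun_iff_measure_inter_preimage_eq_mul] at h ⊢
  intro S sets hsets
  classical
  have key := h (S.image e)
    (sets := Function.extend e sets (fun _ => Set.univ)) ?_
  · have h1 : (⋂ i ∈ S.image e, f i ⁻¹' Function.extend e sets (fun _ => Set.univ) i)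
        = ⋂ k ∈ S, f (e k) ⁻¹' sets k := by
      rw [Finset.set_biInter_finset_image]
      exact Set.iInter₂_congr fun k _ => by rw [he.extend_apply]
    have h2 : (∏ i ∈ S.image e, μ (f i ⁻¹' Function.extend e sets (fun _ => Set.univ) i))
        = ∏ k ∈ S, μ (f (e k) ⁻¹' sets k) := by
      rw [Finset.prod_image (fun a _ b _ hab => he hab)]
      exact Finset.prod_congr rfl fun k _ => by rw [he.extend_apply]
    rw [h1, h2] at key
    exact key
  · intro i hi
    obtain ⟨k, hk, rfl⟩ := Finset.mem_image.mp hi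
    rw [he.extend_apply]
    exact hsets k hk

lemma my_map_pi {Ω κ : Type*} [MeasurableSpace Ω] [Fintype κ] {μ : Measure Ω}
    [IsProbabilityMeasure μ] {f : κ → Ω → ℝ} (hm : ∀ k, Measurable (f k))
    (h : iIndepFun f μ) :
    μ.map (fun ω k => f k ω) = Measure.pi (fun k => μ.map (f k)) := by
  have hT : Measurable (fun ω (k : κ) => f k ω) := measurable_pi_lambda _ hm
  haveI : ∀ k, IsProbabilityMeasure (μ.map (f k)) :=
    fun k => Measure.isProbabilityMeasure_map (hm k).aemeasurable
  refine (Measure.pi_eq (μ := fun k => μ.map (f k)) fun s hs => ?_).symm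
  rw [Measure.map_apply hT (MeasurableSet.univ_pi hs)]
  have hpre : (fun ω (k : κ) => f k ω) ⁻¹' (Set.univ.pi s) = ⋂ k, f k ⁻¹' s k := by
    ext ω; simp [Set.mem_pi]
  rw [hpre, h.meas_iInter fun k => ⟨s k, hs k, rfl⟩]
  exact Finset.prod_congr rfl fun k _ => (Measure.map_apply (hm k) (hs k)).symm

lemma my_pi_perm {κ : Type*} [Fintype κ] (μ0 : Measure ℝ) [IsProbabilityMeasure μ0]
    (f : κ ≃ κ) :
    (Measure.pi fun _ : κ => μ0).map (fun y => y ∘ f) = Measure.pi (fun _ : κ => μ0) := by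
  have hR : Measurable (fun y : κ → ℝ => y ∘ f) :=
    measurable_pi_lambda _ fun p => measurable_pi_apply _
  refine (Measure.pi_eq (μ := fun _ : κ => μ0) fun s hs => ?_).symm
  rw [Measure.map_apply hR (MeasurableSet.univ_pi hs)]
  have hpre : (fun y : κ → ℝ => y ∘ f) ⁻¹' Set.univ.pi s
      = Set.univ.pi (fun q => s (f.symm q)) := by
    ext y
    simp only [Set.mem_preimage, Set.mem_pi, Set.mem_univ, true_implies, Function.comp]
    exact ⟨fun h q => by simpa using h (f.symm q), fun h p => by simpa using h (f p)⟩
  rw [hpre, Measure.pi_pi]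
  exact Fintype.prod_equiv f.symm _ _ fun q => rfl

lemma my_pi_diag {κ : Type*} [Fintype κ] (μ0 : Measure ℝ) [IsProbabilityMeasure μ0]
    {q r : κ} (hqr : q ≠ r) (h0 : ∀ c : ℝ, μ0 {c} = 0) :
    (Measure.pi fun _ : κ => μ0) {y | y q = y r} = 0 := by
  classical
  have hpair : Measurable (fun y : κ → ℝ => (y q, y r)) :=
    (measurable_pi_apply q).prodMk (measurable_pi_apply r)
  have hdiag : MeasurableSet {p : ℝ × ℝ | p.1 = p.2} :=
    measurableSet_eq_fun measurable_fst measurable_snd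
  have hmap : (Measure.pi fun _ : κ => μ0).map (fun y => (y q, y r)) = μ0.prod μ0 := by
    refine (Measure.prod_eq (μ := μ0) (ν := μ0) fun s t hs ht => ?_).symm
    rw [Measure.map_apply hpair (hs.prod ht)]
    have hpre : (fun y : κ → ℝ => (y q, y r)) ⁻¹' (s ×ˢ t)
        = Set.univ.pi (fun p => if p = q then s else if p = r then t else Set.univ) := by
      ext y
      simp only [Set.mem_preimage, Set.mem_prod, Set.mem_pi, Set.mem_univ, true_implies]
      constructor
      · rintro ⟨h1, h2⟩ p
        by_cases hq : p = q
        · subst hq; simpa using h1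
        · by_cases hr : p = r
          · subst hr; simp [hq, h2]
          · simp [hq, hr]
      · intro h
        refine ⟨?_, ?_⟩
        · have := h q; simpa using this
        · have := h r
          rw [if_neg (fun hh : r = q => hqr hh.symm), if_pos rfl] at this
          exact this
    rw [hpre, Measure.pi_pi]
    have hsub : ({q, r} : Finset κ) ⊆ Finset.univ := Finset.subset_univ _
    rw [← Finset.prod_subset hsub (fun x _ hx => ?_), Finset.prod_pair hqr]
    · simp [hqr, Ne.symm hqr]
    · have hxq : x ≠ q := fun hh => hx (by simp [hh])
      have hxr : x ≠ r := fun hh => hx (by simp [hh])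
      simp [hxq, hxr]
  have hpre2 : (fun y : κ → ℝ => (y q, y r)) ⁻¹' {p : ℝ × ℝ | p.1 = p.2} = {y | y q = y r} := rfl
  rw [← hpre2, ← Measure.map_apply hpair hdiag, hmap, Measure.prod_apply hdiag]
  have : ∀ x : ℝ, (Prod.mk x ⁻¹' {p : ℝ × ℝ | p.1 = p.2}) = {x} := by
    intro x; ext y; simp [eq_comm]
  simp [this, h0]


lemma my_C_meas {j d : ℕ} (k : Fin d → Fin j) :
    MeasurableSet (⋂ (i : Fin d) (m : Fin j) (_ : m ≠ k i),
      {y : Fin j × Fin d → ℝ | y (m, i) < y (k i, i)}) :=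
  MeasurableSet.iInter fun i => MeasurableSet.iInter fun m => MeasurableSet.iInter fun _ =>
    measurableSet_lt (measurable_pi_apply _) (measurable_pi_apply _)

lemma my_record_prob (j d : ℕ) (hj : 1 ≤ j) (μ0 : Measure ℝ) [IsProbabilityMeasure μ0]
    (h0 : ∀ c : ℝ, μ0 {c} = 0) (k : Fin d → Fin j) :
    (Measure.pi fun _ : Fin j × Fin d => μ0)
      (⋂ (i : Fin d) (m : Fin j) (_ : m ≠ k i),
        {y : Fin j × Fin d → ℝ | y (m, i) < y (k i, i)}) = ((j : ℝ≥0∞) ^ d)⁻¹ := by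
  classical
  haveI : NeZero j := ⟨by omega⟩
  set ν := (Measure.pi fun _ : Fin j × Fin d => μ0) with hν
  set C : (Fin d → Fin j) → Set (Fin j × Fin d → ℝ) := fun k =>
    ⋂ (i : Fin d) (m : Fin j) (_ : m ≠ k i),
      {y : Fin j × Fin d → ℝ | y (m, i) < y (k i, i)} with hC
  have hmemC : ∀ (k) (y : Fin j × Fin d → ℝ),
      y ∈ C k ↔ ∀ (i : Fin d) (m : Fin j), m ≠ k i → y (m, i) < y (k i, i) := by
    intro k y; simp [hC, Set.mem_iInter]
  -- all C k have the same measure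
  have heq : ∀ k k' : Fin d → Fin j, ν (C k) = ν (C k') := by
    intro k k'
    set σ : Fin d → Equiv.Perm (Fin j) := fun i => Equiv.swap (k i) (k' i) with hσ
    set f : (Fin j × Fin d) ≃ (Fin j × Fin d) :=
      ⟨fun p => (σ p.2 p.1, p.2), fun p => ((σ p.2).symm p.1, p.2),
        fun p => by simp, fun p => by simp⟩ with hf
    have hR : Measurable (fun y : Fin j × Fin d → ℝ => y ∘ f) :=
      measurable_pi_lambda _ fun p => measurable_pi_apply _
    have hmp := my_pi_perm μ0 f
    have hpre : (fun y : Fin j × Fin d → ℝ => y ∘ f) ⁻¹' C k = C k' := by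
      ext y
      simp only [Set.mem_preimage]
      rw [hmemC, hmemC]
      constructor
      · intro h i m' hm'
        have h1 : (σ i).symm m' ≠ k i := by
          intro hh
          apply hm'
          have hm2 : m' = σ i (k i) := by rw [← hh]; simp
          rw [hm2, hσ]; exact Equiv.swap_apply_left _ _
        have := h i ((σ i).symm m') h1
        simpa [hf, hσ, Equiv.swap_apply_left] using this
      · intro h i m hm
        have h1 : σ i m ≠ k' i := by
          intro hh
          apply hm
          have : σ i m = σ i (k i) := by rw [hh, hσ]; simp [Equiv.swap_apply_left]
          exact (σ i).injective this
        have := h i (σ i m) h1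
        simpa [hf, hσ, Equiv.swap_apply_left] using this
    calc ν (C k) = (ν.map (fun y => y ∘ f)) (C k) := by rw [hmp]
    _ = ν ((fun y : Fin j × Fin d → ℝ => y ∘ f) ⁻¹' C k) :=
        Measure.map_apply hR (my_C_meas k)
    _ = ν (C k') := by rw [hpre]
  -- pairwise disjoint
  have hdisj : Pairwise (Function.onFun Disjoint C) := by
    intro k k' hkk'
    obtain ⟨i, hi⟩ := Function.ne_iff.mp hkk'
    rw [Function.onFun, Set.disjoint_left]
    intro y hy hy'
    have h1 := (hmemC k y).mp hy i (k' i) (Ne.symm hi)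
    have h2 := (hmemC k' y).mp hy' i (k i) hi
    exact lt_asymm h1 h2
  -- union has full measure
  have hcompl : ν (⋃ k, C k)ᶜ = 0 := by
    have hsub : (⋃ k, C k)ᶜ ⊆ ⋃ (i : Fin d) (m : Fin j) (m' : Fin j) (_ : m ≠ m'),
        {y : Fin j × Fin d → ℝ | y (m, i) = y (m', i)} := by
      intro y hy
      simp only [Set.mem_compl_iff, Set.mem_iUnion, not_exists] at hy
      by_contra hcon
      simp only [Set.mem_iUnion, not_exists, Set.mem_setOf_eq] at hcon
      apply hy (fun i => Classical.choose (Finset.exists_max_image Finset.univ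
        (fun m : Fin j => y (m, i)) ⟨0, Finset.mem_univ _⟩))
      rw [hmemC]
      intro i m hm
      obtain ⟨-, hmax⟩ := Classical.choose_spec (Finset.exists_max_image Finset.univ
        (fun m : Fin j => y (m, i)) ⟨0, Finset.mem_univ _⟩)
      exact lt_of_le_of_ne (hmax m (Finset.mem_univ _)) (hcon i m _ hm)
    refine measure_mono_null hsub ?_
    refine measure_iUnion_null fun i => measure_iUnion_null fun m =>
      measure_iUnion_null fun m' => measure_iUnion_null fun hne => ?_
    exact my_pi_diag μ0 (by simp [Prod.ext_iff, hne]) h0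
  have huniv : ν (⋃ k, C k) = 1 :=
    (prob_compl_eq_zero_iff (MeasurableSet.iUnion fun k => my_C_meas k)).mp hcompl
  have hsum : ∑ k : Fin d → Fin j, ν (C k) = 1 := by
    rw [← huniv, measure_iUnion ?_ fun k => my_C_meas k]
    · exact (tsum_fintype _).symm
    · exact hdisj
  have hcard : (Fintype.card (Fin d → Fin j) : ℝ≥0∞) = (j : ℝ≥0∞) ^ d := by
    simp [Fintype.card_fun]
  have hconst : ∑ k' : Fin d → Fin j, ν (C k') = (j : ℝ≥0∞) ^ d * ν (C k) := by
    rw [Finset.sum_congr rfl fun k' _ => heq k' k, Finset.sum_const, nsmul_eq_mul,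
      Finset.card_univ, hcard]
  rw [hconst] at hsum
  have hne0 : ((j : ℝ≥0∞) ^ d) ≠ 0 := by
    simp only [ne_eq, pow_eq_zero_iff', Nat.cast_eq_zero]
    rintro ⟨rfl, -⟩; omega
  have hnetop : ((j : ℝ≥0∞) ^ d) ≠ ⊤ := by
    exact ENNReal.pow_ne_top (ENNReal.natCast_ne_top j)
  calc ν (C k) = ((j : ℝ≥0∞) ^ d)⁻¹ * ((j : ℝ≥0∞) ^ d * ν (C k)) := by
        rw [← mul_assoc, ENNReal.inv_mul_cancel hne0 hnetop, one_mul]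
  _ = ((j : ℝ≥0∞) ^ d)⁻¹ := by rw [hsum, mul_one]


/-- For i.i.d. random vectors in `ℝ^d` whose coordinates (across all observations
and directions) are i.i.d. with continuous distribution, the expected number of
multivariate records among the first `n` observations equals `Σ_{j=1}^n 1/j^d`; and
when `d ≥ 2` the total number of multivariate records is almost surely finite. -/
theorem multivariate_record_count {Ω : Type*} [MeasureSpace Ω]
    [IsProbabilityMeasure (ℙ : Measure Ω)]
    (d : ℕ) (hd : 1 ≤ d)
    (X : ℕ → Ω → (Fin d → ℝ)) (hmeas : ∀ j, Measurable (X j))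
    (hindep : iIndepFun
      (fun p : ℕ × Fin d => fun ω => X p.1 ω p.2) ℙ)
    (hid : ∀ p q : ℕ × Fin d,
      IdentDistrib (fun ω => X p.1 ω p.2) (fun ω => X q.1 ω q.2) ℙ ℙ)
    (hcont : ∀ i (c : ℝ), ℙ {ω | X 1 ω i = c} = 0)
    (ζ : ℕ → Ω → ℝ)
    (hζ : ∀ j ω, ζ j ω =
      if ∀ m, 1 ≤ m → m < j → ∀ i, X m ω i < X j ω i then 1 else 0) :
    (∀ n : ℕ, 1 ≤ n →
      ∫ ω, ∑ j ∈ Finset.Icc 1 n, ζ j ω ∂ℙ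
        = ∑ j ∈ Finset.Icc 1 n, (1 : ℝ) / (j : ℝ) ^ d) ∧
    (2 ≤ d → ∀ᵐ ω ∂ℙ,
      {j : ℕ | 1 ≤ j ∧ ∀ m, 1 ≤ m → m < j → ∀ i, X m ω i < X j ω i}.Finite) := by
  classical
  have hfm : ∀ p : ℕ × Fin d, Measurable (fun ω => X p.1 ω p.2) :=
    fun p => (measurable_pi_apply p.2).comp (hmeas p.1)
  set i0 : Fin d := ⟨0, hd⟩ with hi0
  set μ0 : Measure ℝ := Measure.map (fun ω => X 1 ω i0) (ℙ : Measure Ω) with hμ0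
  haveI : IsProbabilityMeasure μ0 := Measure.isProbabilityMeasure_map (hfm (1, i0)).aemeasurable
  have h0 : ∀ c : ℝ, μ0 {c} = 0 := by
    intro c
    rw [hμ0, Measure.map_apply (hfm (1, i0)) (measurableSet_singleton c)]
    exact hcont i0 c
  set A : ℕ → Set Ω := fun j => {ω | ∀ m, 1 ≤ m → m < j → ∀ i, X m ω i < X j ω i} with hA
  have hAmeas : ∀ j, MeasurableSet (A j) := by
    intro j
    have : A j = ⋂ (m : ℕ) (_ : 1 ≤ m) (_ : m < j) (i : Fin d), {ω | X m ω i < X j ω i} := by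
      ext ω; simp [hA, Set.mem_iInter]
    rw [this]
    exact MeasurableSet.iInter fun m => MeasurableSet.iInter fun _ =>
      MeasurableSet.iInter fun _ => MeasurableSet.iInter fun i =>
        measurableSet_lt (hfm (m, i)) (hfm (j, i))
  have hP : ∀ j, 1 ≤ j → ℙ (A j) = ((j : ℝ≥0∞) ^ d)⁻¹ := by
    intro j hj
    set last : Fin j := ⟨j - 1, by omega⟩ with hlastdef
    have hlast : (last : ℕ) + 1 = j := by simp [hlastdef]; omega
    have he : Function.Injective (fun q : Fin j × Fin d => (((q.1 : ℕ) + 1, q.2) : ℕ × Fin d)) := by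
      intro a b hab
      simp only [Prod.mk.injEq] at hab
      exact Prod.ext (Fin.val_injective (by omega)) hab.2
    have hgind := my_reindex hindep he
    have hgm : ∀ q : Fin j × Fin d, Measurable (fun ω => X ((q.1 : ℕ) + 1) ω q.2) :=
      fun q => hfm ((q.1 : ℕ) + 1, q.2)
    have hTm : Measurable (fun ω (q : Fin j × Fin d) => X ((q.1 : ℕ) + 1) ω q.2) :=
      measurable_pi_lambda _ fun q => hgm q
    have hTpi : Measure.map (fun ω (q : Fin j × Fin d) => X ((q.1 : ℕ) + 1) ω q.2) (ℙ : Measure Ω)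
        = Measure.pi (fun _ : Fin j × Fin d => μ0) := by
      rw [my_map_pi hgm hgind]
      exact congrArg Measure.pi (funext fun q => (hid ((q.1 : ℕ) + 1, q.2) (1, i0)).map_eq)
    have hAeq : A j = (fun ω (q : Fin j × Fin d) => X ((q.1 : ℕ) + 1) ω q.2) ⁻¹'
        (⋂ (i : Fin d) (m : Fin j) (_ : m ≠ (fun _ : Fin d => last) i),
          {y : Fin j × Fin d → ℝ | y (m, i) < y ((fun _ : Fin d => last) i, i)}) := by
      ext ω
      simp only [hA, Set.mem_setOf_eq, Set.mem_preimage, Set.mem_iInter]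
      constructor
      · intro h i m hm
        have hmval : (m : ℕ) ≠ j - 1 := fun hh => hm (Fin.ext (by simpa [hlastdef] using hh))
        have h2 : (m : ℕ) + 1 < j := by have := m.isLt; omega
        have := h ((m : ℕ) + 1) (by omega) h2 i
        simpa only [hlast] using this
      · intro h m h1 h2 i
        have hne : (⟨m - 1, by omega⟩ : Fin j) ≠ last := by
          intro hh
          have := congrArg Fin.val hh
          simp only [hlastdef] at this
          omega
        have := h i ⟨m - 1, by omega⟩ hne
        simp only [Set.mem_setOf_eq] at this
        have hm1 : (m - 1 : ℕ) + 1 = m := by omega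
        simpa only [hm1, hlast] using this
    rw [hAeq, ← Measure.map_apply hTm (my_C_meas (fun _ : Fin d => last)), hTpi,
      my_record_prob j d hj μ0 h0]
  have hζeq : ∀ j, ζ j = (A j).indicator (fun _ => (1 : ℝ)) := by
    intro j; funext ω
    rw [hζ]
    by_cases h : ∀ m, 1 ≤ m → m < j → ∀ i, X m ω i < X j ω i
    · rw [if_pos h, Set.indicator_of_mem (show ω ∈ A j from h)]
    · rw [if_neg h, Set.indicator_of_notMem (show ω ∉ A j from h)]
  constructor
  · intro n hn
    have hint : ∀ j ∈ Finset.Icc 1 n, Integrable (ζ j) ℙ := by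
      intro j _
      rw [hζeq]
      exact (integrable_const (1 : ℝ)).indicator (hAmeas j)
    rw [integral_finset_sum _ hint]
    refine Finset.sum_congr rfl fun j hj => ?_
    obtain ⟨hj1, -⟩ := Finset.mem_Icc.mp hj
    rw [hζeq, integral_indicator_const _ (hAmeas j), measureReal_def, hP j hj1, smul_eq_mul, mul_one]
    rw [ENNReal.toReal_inv, ENNReal.toReal_pow, one_div]
    norm_num
  · intro hd2
    have hsum_ne : (∑' j, ℙ (A j)) ≠ ∞ := by
      have hb : ∀ j, ℙ (A j) ≤ ENNReal.ofReal (if j = 0 then 1 else 1 / (j : ℝ) ^ 2) := by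
        intro j
        rcases Nat.eq_zero_or_pos j with rfl | hj
        · rw [if_pos rfl, ENNReal.ofReal_one]
          exact prob_le_one
        · rw [if_neg (by omega), hP j hj]
          have hone : (1 : ℝ≥0∞) ≤ (j : ℝ≥0∞) := by exact_mod_cast hj
          have h2d : ((j : ℝ≥0∞)) ^ 2 ≤ ((j : ℝ≥0∞)) ^ d := pow_le_pow_right₀ hone hd2
          refine (ENNReal.inv_le_inv.mpr h2d).trans_eq ?_
          rw [one_div, ENNReal.ofReal_inv_of_pos (by positivity),
            ENNReal.ofReal_pow (by positivity), ENNReal.ofReal_natCast]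
      refine ne_top_of_le_ne_top ?_ (ENNReal.tsum_le_tsum hb)
      rw [← ENNReal.ofReal_tsum_of_nonneg ?pos ?summ]
      · exact ENNReal.ofReal_ne_top
      case pos =>
        intro j; split_ifs
        · norm_num
        · positivity
      case summ =>
        have S : Summable (fun j : ℕ => 1 / (j : ℝ) ^ 2) :=
          Real.summable_one_div_nat_pow.mpr (by norm_num)
        have hg : (fun j : ℕ => if j = 0 then (1 : ℝ) else 1 / (j : ℝ) ^ 2)
            = (fun j : ℕ => 1 / (j : ℝ) ^ 2) + (fun j : ℕ => if j = 0 then (1 : ℝ) else 0) := by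
          funext n
          rcases Nat.eq_zero_or_pos n with rfl | hn
          · norm_num
          · simp [Nat.pos_iff_ne_zero.mp hn]
        rw [hg]
        exact S.add (summable_of_ne_finset_zero (s := {0}) (fun b hb => by
          simp only [Finset.mem_singleton] at hb; simp [hb]))
    filter_upwards [ae_eventually_notMem hsum_ne] with ω hω
    obtain ⟨N, hN⟩ := Filter.eventually_atTop.mp hω
    refine Set.Finite.subset (Set.finite_Iio N) ?_
    intro j hjmem
    by_contra hjN
    exact hN j (le_of_not_gt hjN) hjmem.2
end
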